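/- Let Δ ∈ ℂ^{E×E} be a diagonal matrix each of whose diagonal entries is 1 or −1, let σ : ℂ → ℂ be an arbitrary function applied entrywise, and let Z_e ∈ ℂ^{E×a}, W_b ∈ ℂ^{a×c}, Z_i ∈ ℂ^{E×c}, W_a ∈ ℂ^{c×c}. Then σ( (Z_i · W_a) ⊙ abs((Δ · Z_e) · W_b) + Z_i ) = σ( (Z_i · W_a) ⊙ abs(Z_e · W_b) + Z_i ); that is, the invariant EIGN fusion operation is unchanged under orientation changes of the equivariant input. -/

import Mathlib

open Matrix

/-- Entrywise complex absolute value of a matrix, viewed in `ℂ`. -/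
noncomputable def absMat {m n : Type*} (M : Matrix m n ℂ) : Matrix m n ℂ :=
  M.map fun z => (‖z‖ : ℂ)

/-- The invariant EIGN fusion operation
`σ((Z_i W_a) ⊙ abs(Z_e W_b) + Z_i)` is unchanged under orientation changes `Δ`
(a diagonal matrix with entries `±1`) of the equivariant input. -/
theorem eign_invariant_fusion
    {E a c : Type*} [Fintype E] [DecidableEq E] [Fintype a] [Fintype c]
    (D : E → ℂ) (hD : ∀ e, D e = 1 ∨ D e = -1)
    (σ : ℂ → ℂ)
    (Ze : Matrix E a ℂ) (Wb : Matrix a c ℂ)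
    (Zi : Matrix E c ℂ) (Wa : Matrix c c ℂ) :
    (((Zi * Wa).hadamard (absMat ((Matrix.diagonal D * Ze) * Wb))) + Zi).map σ
      = (((Zi * Wa).hadamard (absMat (Ze * Wb))) + Zi).map σ := by
  have habs : absMat ((Matrix.diagonal D * Ze) * Wb) = absMat (Ze * Wb) := by
    ext i j
    have h1 : ((Matrix.diagonal D * Ze) * Wb) i j = D i * (Ze * Wb) i j := by
      simp [Matrix.mul_apply, Matrix.diagonal_apply, Finset.mul_sum, mul_assoc]
    have hDi : ‖D i‖ = 1 := by rcases hD i with h | h <;> simp [h]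
    simp [absMat, h1, _root_.map_mul, hDi]
  rw [habs]
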